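/- Let R be a principal ideal domain such that R/m is a finite ring for every maximal ideal m of R. Then R has enough homogeneous polynomials: for every n ≥ 1 and every finite set S ⊆ R^n such that each tuple in S has coprime entries, there exists a nonconstant homogeneous polynomial f ∈ R[x_1, ..., x_n] such that f(X) is a unit of R for every X ∈ S. -/

import Mathlib

open MvPolynomial

namespace EnoughHomAux

section General

variable {R : Type*} [CommRing R]

/-- The linear form with coefficient vector `a`. -/
noncomputable def lin {n : ℕ} (a : Fin n → R) : MvPolynomial (Fin n) R :=
  ∑ i, C (a i) * X i

lemma lin_isHomogeneous {n : ℕ} (a : Fin n → R) : (lin a).IsHomogeneous 1 := by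
  refine IsHomogeneous.sum _ _ _ fun i _ => ?_
  have := (isHomogeneous_C (Fin n) (a i)).mul (isHomogeneous_X R i)
  simpa using this

lemma eval_lin {n : ℕ} (a v : Fin n → R) : eval v (lin a) = ∑ i, a i * v i := by
  simp [lin]

lemma eval_smul_of_isHomogeneous {n : ℕ} {f : MvPolynomial (Fin n) R} {d : ℕ}
    (hf : f.IsHomogeneous d) (r : R) (v : Fin n → R) :
    eval (r • v) f = r ^ d * eval v f := by
  rw [eval_eq, eval_eq, Finset.mul_sum]
  refine Finset.sum_congr rfl fun s hs => ?_
  have hdeg : ∑ i ∈ s.support, s i = d := by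
    have h1 := hf (mem_support_iff.mp hs)
    rw [← h1, show (Finsupp.weight 1 : (Fin n →₀ ℕ) →+ ℕ) = Finsupp.weight (fun _ => 1) from rfl,
      ← Finsupp.degree_eq_weight_one]
    rfl
  calc coeff s f * ∏ i ∈ s.support, (r • v) i ^ s i
      = coeff s f * ∏ i ∈ s.support, (r ^ s i * v i ^ s i) := by
        refine congrArg _ (Finset.prod_congr rfl fun i _ => ?_)
        simp [mul_pow]
    _ = coeff s f * ((∏ i ∈ s.support, r ^ s i) * ∏ i ∈ s.support, v i ^ s i) := by
        rw [Finset.prod_mul_distrib]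
    _ = r ^ d * (coeff s f * ∏ i ∈ s.support, v i ^ s i) := by
        rw [Finset.prod_pow_eq_pow_sum, hdeg]; ring

/-- Every finite field carries an anisotropic binary quadratic form. -/
lemma exists_anisotropic (K : Type*) [Field K] [Finite K] :
    ∃ a b : K, ∀ x y : K, x * x + a * (x * y) + b * (y * y) = 0 → x = 0 ∧ y = 0 := by
  by_cases h : (1 : K) = -1
  · -- characteristic 2 : Artin-Schreier
    have hni : ¬ Function.Injective (fun x : K => x * x + x) := by
      intro hi
      have h01 : (0 : K) * 0 + 0 = 1 * 1 + 1 := by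
        rw [one_mul, mul_zero, zero_add]
        nth_rewrite 2 [h]
        ring
      exact zero_ne_one (hi h01)
    have hns : ¬ Function.Surjective (fun x : K => x * x + x) :=
      fun hs => hni (Finite.injective_iff_surjective.mpr hs)
    simp only [Function.Surjective, not_forall, not_exists] at hns
    obtain ⟨c, hc⟩ := hns
    refine ⟨1, -c, fun x y hxy => ?_⟩
    by_cases hy : y = 0
    · subst hy
      constructor
      · have : x * x = 0 := by linear_combination hxy
        exact (mul_self_eq_zero.mp this)
      · rfl
    · exfalso
      apply hc (x / y)
      have : (x/y) * (x/y) + (x/y) = c := by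
        field_simp
        linear_combination hxy
      linear_combination this
  · -- odd characteristic : take a nonsquare
    have hni : ¬ Function.Injective (fun x : K => x * x) := by
      intro hi
      exact h (hi (by ring : (1 : K) * 1 = (-1) * (-1)))
    have hns : ¬ Function.Surjective (fun x : K => x * x) :=
      fun hs => hni (Finite.injective_iff_surjective.mpr hs)
    simp only [Function.Surjective, not_forall, not_exists] at hns
    obtain ⟨c, hc⟩ := hns
    refine ⟨0, -c, fun x y hxy => ?_⟩
    by_cases hy : y = 0
    · subst hy
      constructor
      · have : x * x = 0 := by linear_combination hxy
        exact (mul_self_eq_zero.mp this)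
      · rfl
    · exfalso
      apply hc (x / y)
      field_simp
      linear_combination hxy

lemma mk_out' {I : Ideal R} (x : R ⧸ I) : Ideal.Quotient.mk I (Quotient.out x) = x :=
  Quotient.out_eq x

lemma exists_coord {n : ℕ} (v : Fin n → R) (hv : Ideal.span (Set.range v) = ⊤)
    {m : Ideal R} (hm : m.IsMaximal) : ∃ i, v i ∉ m := by
  by_contra h
  push_neg at h
  have hle : Ideal.span (Set.range v) ≤ m :=
    Ideal.span_le.mpr (by rintro x ⟨i, rfl⟩; exact h i)
  rw [hv] at hle
  exact hm.ne_top (top_le_iff.mp hle)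

lemma isUnit_mk (c x : R) (h : ∀ m : Ideal R, m.IsMaximal → c ∈ m → x ∉ m) :
    IsUnit (Ideal.Quotient.mk (Ideal.span {c}) x) := by
  by_contra hu
  obtain ⟨m', hm', hxm'⟩ := exists_max_ideal_of_mem_nonunits hu
  have hsurj := Ideal.Quotient.mk_surjective (I := Ideal.span {c})
  have hmax : (Ideal.comap (Ideal.Quotient.mk (Ideal.span {c})) m').IsMaximal :=
    Ideal.comap_isMaximal_of_surjective _ hsurj
  have hcm : c ∈ Ideal.comap (Ideal.Quotient.mk (Ideal.span {c})) m' := by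
    have : Ideal.Quotient.mk (Ideal.span {c}) c = 0 :=
      Ideal.Quotient.eq_zero_iff_mem.mpr (Ideal.mem_span_singleton_self c)
    simp only [Ideal.mem_comap, this]
    exact m'.zero_mem
  exact h _ hmax hcm hxm'

/-- The recursive everywhere-nonvanishing form built from an anisotropic binary form. -/
lemma exists_form {n : ℕ} (a b : R) (Mset : Set (Ideal R))
    (hmax : ∀ m ∈ Mset, m.IsMaximal)
    (hab : ∀ m ∈ Mset, ∀ x y : R, x * x + a * (x * y) + b * (y * y) ∈ m → x ∈ m ∧ y ∈ m) :
    ∀ j : ℕ, j < n → ∃ F : MvPolynomial (Fin n) R, F.IsHomogeneous (2 ^ j) ∧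
      ∀ v : Fin n → R, ∀ m ∈ Mset, (∃ i : Fin n, i.1 ≤ j ∧ v i ∉ m) → eval v F ∉ m := by
  intro j
  induction j with
  | zero =>
    intro hj
    refine ⟨X ⟨0, hj⟩, by simpa using isHomogeneous_X R _, ?_⟩
    rintro v m hm ⟨i, hi0, him⟩
    have : i = ⟨0, hj⟩ := Fin.ext (Nat.le_zero.mp hi0)
    subst this
    simpa using him
  | succ j ih =>
    intro hj
    obtain ⟨F, hF, hval⟩ := ih (Nat.lt_of_succ_lt hj)
    set k : Fin n := ⟨j + 1, hj⟩ with hk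
    set G : MvPolynomial (Fin n) R := X k ^ 2 ^ j with hG
    have hGhom : G.IsHomogeneous (2 ^ j) := by
      have := (isHomogeneous_X R k).pow (2 ^ j)
      simpa using this
    have h2 : (2 : ℕ) ^ (j + 1) = 2 ^ j + 2 ^ j := by rw [pow_succ]; ring
    refine ⟨F * F + C a * (F * G) + C b * (G * G), ?_, ?_⟩
    · rw [h2]
      refine ((hF.mul hF).add ?_).add ?_
      · have := (isHomogeneous_C (Fin n) a).mul (hF.mul hGhom)
        simpa using this
      · have := (isHomogeneous_C (Fin n) b).mul (hGhom.mul hGhom)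
        simpa using this
    · rintro v m hm ⟨i, hij, him⟩
      intro hmem
      have heval : eval v (F * F + C a * (F * G) + C b * (G * G)) =
          eval v F * eval v F + a * (eval v F * (v k ^ 2 ^ j)) +
            b * ((v k ^ 2 ^ j) * (v k ^ 2 ^ j)) := by
        simp [hG]
      rw [heval] at hmem
      obtain ⟨hx, hy⟩ := hab m hm _ _ hmem
      rcases Nat.lt_succ_iff_lt_or_eq.mp (Nat.lt_succ_of_le hij) with hlt | heq
      · exact hval v m hm ⟨i, Nat.lt_succ_iff.mp hlt, him⟩ hx
      · have hik : i = k := Fin.ext heq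
        subst hik
        exact him ((hmax m hm).isPrime.mem_of_pow_mem _ hy)

lemma finite_Mset (c : R) [Finite (R ⧸ Ideal.span {c})] :
    Finite {m : Ideal R // m.IsMaximal ∧ c ∈ m} := by
  have hker : RingHom.ker (Ideal.Quotient.mk (Ideal.span {c})) = Ideal.span {c} :=
    Ideal.mk_ker
  haveI : Finite (Ideal (R ⧸ Ideal.span {c})) :=
    Finite.of_injective (fun I => (I : Set (R ⧸ Ideal.span {c}))) SetLike.coe_injective
  refine Finite.of_injective
    (fun m => Ideal.map (Ideal.Quotient.mk (Ideal.span {c})) m.1) ?_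
  intro m m' h
  have key : ∀ m : {m : Ideal R // m.IsMaximal ∧ c ∈ m},
      Ideal.comap (Ideal.Quotient.mk (Ideal.span {c}))
        (Ideal.map (Ideal.Quotient.mk (Ideal.span {c})) m.1) = m.1 := by
    intro m
    rw [Ideal.comap_map_of_surjective _ Ideal.Quotient.mk_surjective, ← RingHom.ker_eq_comap_bot,
      hker]
    exact sup_eq_left.mpr ((Ideal.span_le).mpr (Set.singleton_subset_iff.mpr m.2.2))
  have := congrArg (Ideal.comap (Ideal.Quotient.mk (Ideal.span {c}))) h
  rw [key m, key m'] at this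
  exact Subtype.ext this

/-- A binary quadratic form over `R` that is anisotropic modulo every maximal ideal
containing `c`, obtained by the Chinese remainder theorem. -/
lemma exists_ab (hfin : ∀ m : Ideal R, m.IsMaximal → Finite (R ⧸ m)) (c : R)
    [Finite (R ⧸ Ideal.span {c})] :
    ∃ a b : R, ∀ m : Ideal R, m.IsMaximal → c ∈ m →
      ∀ x y : R, x * x + a * (x * y) + b * (y * y) ∈ m → x ∈ m ∧ y ∈ m := by
  haveI := finite_Mset c
  set ι := {m : Ideal R // m.IsMaximal ∧ c ∈ m}
  have hAB : ∀ i : ι, ∃ A B : R ⧸ i.1, ∀ x y : R ⧸ i.1,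
      x * x + A * (x * y) + B * (y * y) = 0 → x = 0 ∧ y = 0 := by
    intro i
    haveI := i.2.1
    letI := Ideal.Quotient.field i.1
    haveI : Finite (R ⧸ i.1) := hfin i.1 i.2.1
    exact exists_anisotropic _
  choose A B hAB using hAB
  have hcop : Pairwise (Function.onFun IsCoprime fun i : ι => i.1) := by
    intro i j hij
    exact Ideal.isCoprime_iff_sup_eq.mpr
      (Ideal.IsMaximal.coprime_of_ne i.2.1 j.2.1 (fun h => hij (Subtype.ext h)))
  obtain ⟨a, ha⟩ := Ideal.pi_quotient_surjective hcop A
  obtain ⟨b, hb⟩ := Ideal.pi_quotient_surjective hcop B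
  refine ⟨a, b, fun m hm hcm x y hxy => ?_⟩
  set i : ι := ⟨m, hm, hcm⟩
  have hmk : (Ideal.Quotient.mk m) (x * x + a * (x * y) + b * (y * y)) = 0 :=
    Ideal.Quotient.eq_zero_iff_mem.mpr hxy
  have ha' : (Ideal.Quotient.mk m) a = A i := ha i
  have hb' : (Ideal.Quotient.mk m) b = B i := hb i
  have := hAB i (Ideal.Quotient.mk m x) (Ideal.Quotient.mk m y)
    (by rw [← ha', ← hb']; simpa using hmk)
  exact ⟨Ideal.Quotient.eq_zero_iff_mem.mp this.1, Ideal.Quotient.eq_zero_iff_mem.mp this.2⟩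

end General

section PID

variable {R : Type*} [CommRing R] [IsDomain R] [IsPrincipalIdealRing R]

/-- In a PID with finite residue fields, quotients by nonzero principal ideals are finite. -/
lemma finite_quot (hfin : ∀ m : Ideal R, m.IsMaximal → Finite (R ⧸ m)) :
    ∀ c : R, c ≠ 0 → Finite (R ⧸ Ideal.span {c}) := by
  intro c
  refine UniqueFactorizationMonoid.induction_on_prime c (fun h => absurd rfl h) ?_ ?_
  · intro x hx _
    have hx2 : Ideal.span {x} = ⊤ := Ideal.span_singleton_eq_top.mpr hx
    have : Subsingleton (R ⧸ Ideal.span {x}) := Ideal.Quotient.subsingleton_iff.mpr hx2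
    exact Finite.of_subsingleton
  · intro d p hd hp hF _
    have h1 : Finite (R ⧸ Ideal.span {d}) := hF hd
    have h2 : Finite (R ⧸ Ideal.span {p}) :=
      hfin _ (PrincipalIdealRing.isMaximal_of_irreducible hp.irreducible)
    refine Finite.of_surjective
      (f := fun xy : (R ⧸ Ideal.span {d}) × (R ⧸ Ideal.span {p}) =>
        Ideal.Quotient.mk (Ideal.span {p * d}) (Quotient.out xy.1 + d * Quotient.out xy.2)) ?_
    intro z
    obtain ⟨w, rfl⟩ := Ideal.Quotient.mk_surjective z
    have hw : w - Quotient.out (Ideal.Quotient.mk (Ideal.span {d}) w) ∈ Ideal.span {d} := by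
      rw [← Ideal.Quotient.eq]
      rw [mk_out']
    obtain ⟨t, ht⟩ := Ideal.mem_span_singleton'.mp hw
    refine ⟨⟨Ideal.Quotient.mk _ w, Ideal.Quotient.mk _ t⟩, ?_⟩
    rw [Ideal.Quotient.eq]
    have hout : Quotient.out (Ideal.Quotient.mk (Ideal.span {p}) t) - t ∈ Ideal.span {p} := by
      rw [← Ideal.Quotient.eq, mk_out']
    obtain ⟨u, hu⟩ := Ideal.mem_span_singleton'.mp hout
    rw [Ideal.mem_span_singleton']
    refine ⟨u, ?_⟩
    have hthis : Quotient.out (Ideal.Quotient.mk (Ideal.span {d}) w) = w - t * d := by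
      linear_combination ht
    rw [hthis]
    linear_combination d * hu

/-- The main construction, for a finite family of pairwise non-proportional
unimodular tuples. -/
lemma main_indep (hfin : ∀ m : Ideal R, m.IsMaximal → Finite (R ⧸ m))
    {n : ℕ} (hn : 1 ≤ n) (S : Finset (Fin n → R))
    (hS : ∀ Q ∈ S, Ideal.span (Set.range Q) = ⊤)
    (hind : ∀ P ∈ S, ∀ Q ∈ S, P ≠ Q → ∀ α : R, Q ≠ α • P) :
    ∃ f : MvPolynomial (Fin n) R, ∃ d : ℕ, 1 ≤ d ∧ f.IsHomogeneous d ∧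
      ∀ Q ∈ S, IsUnit (eval Q f) := by
  classical
  rcases S.eq_empty_or_nonempty with rfl | hSne
  · exact ⟨X ⟨0, hn⟩, 1, le_rfl, isHomogeneous_X R _, by simp⟩
  -- unimodularity witnesses
  have ha : ∀ Q : Fin n → R, ∃ a : Fin n → R, Q ∈ S → ∑ i, a i * Q i = 1 := by
    intro Q
    by_cases hQ : Q ∈ S
    · have h1 : (1 : R) ∈ Ideal.span (Set.range Q) := by rw [hS Q hQ]; exact Submodule.mem_top
      obtain ⟨a, hA⟩ := (Submodule.mem_span_range_iff_exists_fun R).mp h1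
      exact ⟨a, fun _ => by simpa [smul_eq_mul] using hA⟩
    · exact ⟨0, fun h => absurd h hQ⟩
  choose av hav using ha
  -- separating linear forms
  have hb : ∀ P Q : Fin n → R, ∃ bv : Fin n → R,
      P ∈ S → Q ∈ S → P ≠ Q → ((∑ i, bv i * P i = 0) ∧ (∑ i, bv i * Q i ≠ 0)) := by
    intro P Q
    by_cases hPQ : P ∈ S ∧ Q ∈ S ∧ P ≠ Q
    · obtain ⟨hP, hQ, hne⟩ := hPQ
      have hQα : Q ≠ (∑ i, av P i * Q i) • P := hind P hP Q hQ hne _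
      have hex : ∃ k, Q k ≠ (∑ i, av P i * Q i) * P k := by
        by_contra hcon
        push_neg at hcon
        exact hQα (funext fun k => hcon k)
      obtain ⟨k, hk⟩ := hex
      refine ⟨fun i => (if i = k then 1 else 0) - av P i * P k, fun _ _ _ => ⟨?_, ?_⟩⟩
      · have e1 : ∑ i, (if i = k then (1:R) else 0) * P i = P k := by
          simp only [ite_mul, one_mul, zero_mul]
          rw [Finset.sum_ite_eq' Finset.univ k P]
          simp
        have e2 : ∑ i, av P i * P k * P i = P k := by
          have hre : ∀ i ∈ Finset.univ, av P i * P k * P i = P k * (av P i * P i) :=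
            fun i _ => by ring
          rw [Finset.sum_congr rfl hre, ← Finset.mul_sum, hav P hP, mul_one]
        simp only [sub_mul]
        rw [Finset.sum_sub_distrib, e1, e2, sub_self]
      · have e1 : ∑ i, (if i = k then (1:R) else 0) * Q i = Q k := by
          simp only [ite_mul, one_mul, zero_mul]
          rw [Finset.sum_ite_eq' Finset.univ k Q]
          simp
        have e2 : ∑ i, av P i * P k * Q i = (∑ i, av P i * Q i) * P k := by
          have hre : ∀ i ∈ Finset.univ, av P i * P k * Q i = (av P i * Q i) * P k :=
            fun i _ => by ring
          rw [Finset.sum_congr rfl hre, ← Finset.sum_mul]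
        simp only [sub_mul]
        rw [Finset.sum_sub_distrib, e1, e2]
        exact sub_ne_zero_of_ne hk
    · exact ⟨0, fun h1 h2 h3 => absurd ⟨h1, h2, h3⟩ hPQ⟩
  choose bv hbv using hb
  set cQf : (Fin n → R) → R := fun Q => ∏ P ∈ S.erase Q, ∑ i, bv P Q i * Q i with hcQf
  set c : R := ∏ Q ∈ S, cQf Q with hcdef
  have hc0 : c ≠ 0 := by
    rw [hcdef]
    rw [Finset.prod_ne_zero_iff]
    intro Q hQ
    rw [hcQf, Finset.prod_ne_zero_iff]
    intro P hP
    exact (hbv P Q (Finset.mem_of_mem_erase hP) hQ (Finset.mem_erase.mp hP).1).2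
  haveI : Finite (R ⧸ Ideal.span {c}) := finite_quot hfin c hc0
  obtain ⟨a, b, hab⟩ := exists_ab hfin c
  obtain ⟨F, hFhom, hFval⟩ := exists_form (n := n) a b {m : Ideal R | m.IsMaximal ∧ c ∈ m}
    (fun m hm => hm.1) (fun m hm => hab m hm.1 hm.2) (n - 1) (by omega)
  have hD : 1 ≤ 2 ^ (n - 1) := Nat.one_le_two_pow
  haveI : Finite (R ⧸ Ideal.span {c})ˣ := Finite.of_injective _ Units.val_injective
  set M := Nat.card (R ⧸ Ideal.span {c})ˣ with hMdef
  have hM : 1 ≤ M := Nat.card_pos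
  set kk := S.card with hkkdef
  have hkk : 1 ≤ kk := Finset.card_pos.mpr hSne
  set E := M * (kk + 1) with hEdef
  have hE : kk + 1 ≤ 2 ^ (n - 1) * E := by
    calc kk + 1 = 1 * (1 * (kk + 1)) := by ring
    _ ≤ 2 ^ (n - 1) * (M * (kk + 1)) := Nat.mul_le_mul hD (Nat.mul_le_mul hM le_rfl)
  set f := F ^ E with hfdef
  have hfone : ∀ Q ∈ S, Ideal.Quotient.mk (Ideal.span {c}) (eval Q f) = 1 := by
    intro Q hQ
    have hnv : ∀ m : Ideal R, m.IsMaximal → c ∈ m → eval Q F ∉ m := by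
      intro m hm hcm
      obtain ⟨i, hi⟩ := exists_coord Q (hS Q hQ) hm
      exact hFval Q m ⟨hm, hcm⟩ ⟨i, by omega, hi⟩
    obtain ⟨u, hu⟩ := isUnit_mk c (eval Q F) hnv
    have h1 : Ideal.Quotient.mk (Ideal.span {c}) (eval Q f) = (u : R ⧸ Ideal.span {c}) ^ E := by
      rw [hfdef, map_pow, map_pow, hu]
    rw [h1, ← Units.val_pow_eq_pow_val]
    have h2 : u ^ E = 1 := by
      rw [hEdef, pow_mul, pow_card_eq_one', one_pow]
    rw [h2, Units.val_one]
  have hs : ∀ Q : Fin n → R, ∃ s : R, Q ∈ S → eval Q f = 1 + s * c := by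
    intro Q
    by_cases hQ : Q ∈ S
    · have h1 : eval Q f - 1 ∈ Ideal.span {c} :=
        (Ideal.Quotient.eq).mp (by rw [hfone Q hQ, map_one])
      obtain ⟨s, hs⟩ := Ideal.mem_span_singleton'.mp h1
      exact ⟨s, fun _ => by linear_combination -hs⟩
    · exact ⟨0, fun h => absurd h hQ⟩
  choose sv hsv using hs
  set e := 2 ^ (n - 1) * E - (kk - 1) with hedef
  have hke : (kk - 1) + e = 2 ^ (n - 1) * E := by omega
  set g : (Fin n → R) → MvPolynomial (Fin n) R := fun Q =>
    (∏ P ∈ S.erase Q, lin (bv P Q)) * (lin (av Q)) ^ e with hgdef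
  have hghom : ∀ Q ∈ S, (g Q).IsHomogeneous (2 ^ (n - 1) * E) := by
    intro Q hQ
    have h1 : (∏ P ∈ S.erase Q, lin (bv P Q)).IsHomogeneous (kk - 1) := by
      have h3 := IsHomogeneous.prod (S.erase Q) (fun P => lin (bv P Q)) (fun _ => 1)
        (fun P _ => lin_isHomogeneous _)
      simpa [Finset.sum_const, Finset.card_erase_of_mem hQ, hkkdef] using h3
    have h2 : ((lin (av Q)) ^ e).IsHomogeneous e := by
      simpa using (lin_isHomogeneous (av Q)).pow e
    have h4 := h1.mul h2
    rwa [hke] at h4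
  set h := f - ∑ Q ∈ S, C (sv Q * ∏ P ∈ S.erase Q, cQf P) * g Q with hhdef
  refine ⟨h, 2 ^ (n - 1) * E, by omega, ?_, ?_⟩
  · refine (by simpa [hfdef] using hFhom.pow E : f.IsHomogeneous _).sub
      (IsHomogeneous.sum _ _ _ fun Q hQ => ?_)
    have h5 := (isHomogeneous_C (Fin n) (sv Q * ∏ P ∈ S.erase Q, cQf P)).mul (hghom Q hQ)
    simpa using h5
  · intro Q hQ
    have hgQQ : eval Q (g Q) = cQf Q := by
      simp only [hgdef, map_mul, map_prod, map_pow, eval_lin]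
      rw [hav Q hQ, one_pow, mul_one, hcQf]
    have hgQ' : ∀ Q' ∈ S, Q' ≠ Q → eval Q (g Q') = 0 := by
      intro Q' hQ' hne
      simp only [hgdef, map_mul, map_prod, map_pow, eval_lin]
      apply mul_eq_zero_of_left
      refine Finset.prod_eq_zero (i := Q)
        (Finset.mem_erase.mpr ⟨fun hqq => hne (hqq.symm), hQ⟩) ?_
      exact (hbv Q Q' hQ hQ' (fun hqq => hne (hqq.symm))).1
    have hsum : eval Q (∑ Q' ∈ S, C (sv Q' * ∏ P ∈ S.erase Q', cQf P) * g Q') = sv Q * c := by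
      rw [map_sum, Finset.sum_eq_single_of_mem Q hQ]
      · rw [map_mul, eval_C, hgQQ, mul_assoc, hcdef, Finset.prod_erase_mul S cQf hQ]
      · intro Q' hQ' hne
        rw [map_mul, hgQ' Q' hQ' hne, mul_zero]
    have : eval Q h = 1 := by
      rw [hhdef, map_sub, hsum, hsv Q hQ]
      ring
    rw [this]
    exact isUnit_one

end PID

end EnoughHomAux

/-- A commutative ring `R` has enough homogeneous polynomials if for every `n ≥ 1`
and every finite set `S ⊆ R^n` whose tuples have coprime entries, there is a
nonconstant homogeneous polynomial taking unit values on `S`. -/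
def HasEnoughHomogeneousPolynomials (R : Type*) [CommRing R] : Prop :=
  ∀ n : ℕ, 1 ≤ n → ∀ S : Finset (Fin n → R),
    (∀ Q ∈ S, Ideal.span (Set.range Q) = ⊤) →
    ∃ (f : MvPolynomial (Fin n) R) (d : ℕ), 1 ≤ d ∧ f.IsHomogeneous d ∧
      ∀ Q ∈ S, IsUnit (MvPolynomial.eval Q f)

/-- A PID all of whose quotients by maximal ideals are finite has enough
homogeneous polynomials. -/
theorem pid_hasEnoughHomogeneousPolynomials (R : Type*) [CommRing R] [IsDomain R]
    [IsPrincipalIdealRing R]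
    (hfin : ∀ m : Ideal R, m.IsMaximal → Finite (R ⧸ m)) :
    HasEnoughHomogeneousPolynomials R := by
  classical
  intro n hn S
  induction S using Finset.strongInduction with
  | _ S ih =>
    intro hS
    by_cases hprop : ∃ P ∈ S, ∃ Q ∈ S, P ≠ Q ∧ ∃ α : R, Q = α • P
    · obtain ⟨P, hP, Q, hQ, hne, α, hQα⟩ := hprop
      subst hQα
      obtain ⟨f, d, hd, hf, hval⟩ := ih (S.erase (α • P)) (Finset.erase_ssubset hQ)
        (fun Q' hQ' => hS _ (Finset.mem_of_mem_erase hQ'))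
      refine ⟨f, d, hd, hf, fun Q' hQ' => ?_⟩
      by_cases hQ'e : Q' = α • P
      · subst hQ'e
        have hα : IsUnit α := by
          have hle : Ideal.span (Set.range (α • P)) ≤ Ideal.span {α} := by
            refine Ideal.span_le.mpr ?_
            rintro x ⟨i, rfl⟩
            exact Ideal.mem_span_singleton.mpr ⟨P i, rfl⟩
          rw [hS _ hQ] at hle
          exact Ideal.span_singleton_eq_top.mp (top_le_iff.mp hle)
        rw [EnoughHomAux.eval_smul_of_isHomogeneous hf]
        exact (hα.pow d).mul (hval P (Finset.mem_erase.mpr ⟨hne, hP⟩))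
      · exact hval Q' (Finset.mem_erase.mpr ⟨hQ'e, hQ'⟩)
    · push_neg at hprop
      exact EnoughHomAux.main_indep hfin hn S hS hprop
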